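/- Suppose g : Y → ℝ ∪ {+∞} is proper convex, H : Y → Y is self-adjoint positive semidefinite, and for k and k−1 one has B*(γ_k − (1−θ)γ_{k−1})/θ − H(y_k − y_{k−1}) ∈ ∂g(y_k) and B*(γ_{k−1} − (1−θ)γ_{k−2})/θ − H(y_{k−1} − y_{k−2}) ∈ ∂g(y_{k−1}). Then (1/θ)⟨γ_k − γ_{k−1}, B(y_k − y_{k−1})⟩ ≥ ((1−θ)/θ)⟨γ_{k−1} − γ_{k−2}, B(y_k − y_{k−1})⟩ + (1/2)‖y_k − y_{k−1}‖_H² − (1/2)‖y_{k−1} − y_{k−2}‖_H². -/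

import Mathlib

open RealInnerProductSpace

theorem stmt_15 {Y Γ : Type*} [NormedAddCommGroup Y] [InnerProductSpace ℝ Y]
    [NormedAddCommGroup Γ] [InnerProductSpace ℝ Γ]
    [FiniteDimensional ℝ Y] [FiniteDimensional ℝ Γ]
    (B : Y →ₗ[ℝ] Γ) (g : Y → EReal)
    (hgne : ∃ y, g y ≠ ⊤) (hgnb : ∀ y, g y ≠ ⊥)
    (H : Y →ₗ[ℝ] Y)
    (hHsa : ∀ u w : Y, ⟪H u, w⟫ = ⟪u, H w⟫)
    (hHpsd : ∀ v : Y, 0 ≤ ⟪H v, v⟫)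
    (θ : ℝ) (hθ : 0 < θ)
    (yk2 yk1 yk : Y) (γk2 γk1 γk : Γ)
    (hk : ∀ w : Y,
      g yk + ((⟪(1 / θ) • (LinearMap.adjoint B) (γk - (1 - θ) • γk1) -
        H (yk - yk1), w - yk⟫ : ℝ) : EReal) ≤ g w)
    (hk1 : ∀ w : Y,
      g yk1 + ((⟪(1 / θ) • (LinearMap.adjoint B) (γk1 - (1 - θ) • γk2) -
        H (yk1 - yk2), w - yk1⟫ : ℝ) : EReal) ≤ g w) :
    (1 / θ) * ⟪γk - γk1, B (yk - yk1)⟫ ≥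
      ((1 - θ) / θ) * ⟪γk1 - γk2, B (yk - yk1)⟫ +
      (1 / 2) * ⟪H (yk - yk1), yk - yk1⟫ -
      (1 / 2) * ⟪H (yk1 - yk2), yk1 - yk2⟫ := by
  obtain ⟨y0, hy0⟩ := hgne
  -- g yk and g yk1 are finite
  have hkt : g yk ≠ ⊤ := by
    intro h
    have := hk y0
    rw [h] at this
    simp [EReal.top_add_of_ne_bot, EReal.coe_ne_bot] at this
    exact hy0 this
  have hk1t : g yk1 ≠ ⊤ := by
    intro h
    have := hk1 y0
    rw [h] at this
    simp [EReal.top_add_of_ne_bot, EReal.coe_ne_bot] at this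
    exact hy0 this
  set r : ℝ := (g yk).toReal with hr
  set s : ℝ := (g yk1).toReal with hs
  have hgk : g yk = (r : EReal) := (EReal.coe_toReal hkt (hgnb yk)).symm
  have hgk1 : g yk1 = (s : EReal) := (EReal.coe_toReal hk1t (hgnb yk1)).symm
  have h1 := hk yk1
  have h2 := hk1 yk
  rw [hgk, hgk1, ← EReal.coe_add, EReal.coe_le_coe_iff] at h1 h2
  -- combine the two real inequalities
  have key : ⟪(1 / θ) • (LinearMap.adjoint B) (γk - (1 - θ) • γk1) -
        H (yk - yk1), yk1 - yk⟫ +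
      ⟪(1 / θ) • (LinearMap.adjoint B) (γk1 - (1 - θ) • γk2) -
        H (yk1 - yk2), yk - yk1⟫ ≤ 0 := by linarith
  have hpsd := hHpsd ((yk - yk1) - (yk1 - yk2))
  have hsym : ⟪H (yk1 - yk2), yk - yk1⟫ = ⟪H (yk - yk1), yk1 - yk2⟫ := by
    rw [hHsa, real_inner_comm]
  simp only [inner_sub_left, inner_sub_right, inner_smul_left, inner_smul_right,
    LinearMap.adjoint_inner_left, map_sub, map_smul, RCLike.conj_to_real,
    real_inner_smul_left, real_inner_smul_right] at key hpsd hsym ⊢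
  have hθ' : θ ≠ 0 := ne_of_gt hθ
  field_simp at key
  have key2 := key.trans_eq (mul_zero θ)
  have hmul := mul_nonneg hθ.le hpsd
  have hsymθ : θ * (⟪H yk1, yk⟫ - ⟪H yk2, yk⟫ - (⟪H yk1, yk1⟫ - ⟪H yk2, yk1⟫)) =
      θ * (⟪H yk, yk1⟫ - ⟪H yk1, yk1⟫ - (⟪H yk, yk2⟫ - ⟪H yk1, yk2⟫)) := by rw [hsym]
  rw [ge_iff_le, ← sub_nonneg]
  have hM : (1 / θ) * (⟪γk, B yk⟫ - ⟪γk1, B yk⟫ - (⟪γk, B yk1⟫ - ⟪γk1, B yk1⟫)) -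
      ((1 - θ) / θ * (⟪γk1, B yk⟫ - ⟪γk2, B yk⟫ - (⟪γk1, B yk1⟫ - ⟪γk2, B yk1⟫)) +
        1 / 2 * (⟪H yk, yk⟫ - ⟪H yk1, yk⟫ - (⟪H yk, yk1⟫ - ⟪H yk1, yk1⟫)) -
        1 / 2 * (⟪H yk1, yk1⟫ - ⟪H yk2, yk1⟫ - (⟪H yk1, yk2⟫ - ⟪H yk2, yk2⟫))) =
      (1 / θ) * ((⟪γk, B yk⟫ - ⟪γk1, B yk⟫ - (⟪γk, B yk1⟫ - ⟪γk1, B yk1⟫)) -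
        ((1 - θ) * (⟪γk1, B yk⟫ - ⟪γk2, B yk⟫ - (⟪γk1, B yk1⟫ - ⟪γk2, B yk1⟫)) +
          θ * (1 / 2 * (⟪H yk, yk⟫ - ⟪H yk1, yk⟫ - (⟪H yk, yk1⟫ - ⟪H yk1, yk1⟫)) -
          1 / 2 * (⟪H yk1, yk1⟫ - ⟪H yk2, yk1⟫ - (⟪H yk1, yk2⟫ - ⟪H yk2, yk2⟫))))) := by
    field_simp; ring
  rw [hM]
  apply mul_nonneg (by positivity)
  nlinarith [key2, hmul, hsymθ]
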